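/- Every connected graph G of order n ≥ 2 is 𝔡(G)-partition dimensional; that is, 𝔡(G) is the largest integer k such that G admits a k-partition generator. -/

import Mathlib

open SimpleGraph Finset

/-- Distance from a vertex to a finite set of vertices:
`min_{w ∈ S} d(u, w)`. -/
noncomputable def setDist {V : Type*} (G : SimpleGraph V) (u : V) (S : Finset V) : ℕ :=
  sInf (G.dist u '' (S : Set V))

/-- The set `𝒟_G(x,y)` of vertices distinguishing `x` and `y`. -/
noncomputable def DG {V : Type*} (G : SimpleGraph V) [Fintype V] (x y : V) : Finset V :=
  Finset.univ.filter fun z => G.dist z x ≠ G.dist z y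

/-- `𝔡(G) = min_{x ≠ y} |𝒟_G(x,y)|`. -/
noncomputable def frakd {V : Type*} (G : SimpleGraph V) [Fintype V] : ℕ :=
  sInf {m | ∃ x y : V, x ≠ y ∧ (DG G x y).card = m}

/-- `𝔡*(G) = max_{x ≠ y} |𝒟_G(x,y)|`. -/
noncomputable def frakdStar {V : Type*} (G : SimpleGraph V) [Fintype V] : ℕ :=
  sSup {m | ∃ x y : V, x ≠ y ∧ (DG G x y).card = m}

/-- A partition of the vertex set is a `k`-partition generator if every pair of
distinct vertices is distinguished by at least `k` parts. -/
noncomputable def IsKPartitionGenerator {V : Type*} (G : SimpleGraph V) [Fintype V]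
    [DecidableEq V] (k : ℕ) (P : Finpartition (Finset.univ : Finset V)) : Prop :=
  ∀ u v : V, u ≠ v → k ≤ (P.parts.filter fun S => setDist G u S ≠ setDist G v S).card

/-- The `k`-partition dimension `pd_k(G)`. -/
noncomputable def pd {V : Type*} (G : SimpleGraph V) [Fintype V] [DecidableEq V] (k : ℕ) : ℕ :=
  sInf {m | ∃ P : Finpartition (Finset.univ : Finset V),
    IsKPartitionGenerator G k P ∧ P.parts.card = m}

/-- A set of vertices is a `k`-metric generator if every pair of distinct
vertices is distinguished by at least `k` of its vertices. -/
def IsKMetricGenerator {V : Type*} (G : SimpleGraph V) [Fintype V] (k : ℕ) (W : Finset V) : Prop :=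
  ∀ u v : V, u ≠ v → k ≤ (W.filter fun z => G.dist z u ≠ G.dist z v).card

/-- The `k`-metric dimension `dim_k(G)`. -/
noncomputable def metricDim {V : Type*} (G : SimpleGraph V) [Fintype V] (k : ℕ) : ℕ :=
  sInf {m | ∃ W : Finset V, IsKMetricGenerator G k W ∧ W.card = m}

lemma setDist_eq_of_forall {V : Type*} (G : SimpleGraph V) (x y : V) (S : Finset V)
    (h : ∀ z ∈ S, G.dist z x = G.dist z y) : setDist G x S = setDist G y S := by
  unfold setDist
  congr 1
  apply Set.image_congr
  intro z hz
  rw [SimpleGraph.dist_comm (u := x), h z hz, SimpleGraph.dist_comm]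

theorem stmt_1 {V : Type*} [Fintype V] [DecidableEq V] (G : SimpleGraph V)
    (hG : G.Connected) (hn : 2 ≤ Fintype.card V) :
    (∃ P : Finpartition (Finset.univ : Finset V), IsKPartitionGenerator G (frakd G) P) ∧
    (∀ k : ℕ, (∃ P : Finpartition (Finset.univ : Finset V), IsKPartitionGenerator G k P) →
      k ≤ frakd G) := by
  obtain ⟨x0, y0, hxy0⟩ := Fintype.exists_pair_of_one_lt_card (by omega : 1 < Fintype.card V)
  have hne : {m | ∃ x y : V, x ≠ y ∧ (DG G x y).card = m}.Nonempty := ⟨_, x0, y0, hxy0, rfl⟩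
  constructor
  · refine ⟨⊥, fun u v huv => ?_⟩
    have h1 : frakd G ≤ (DG G u v).card := Nat.sInf_le ⟨u, v, huv, rfl⟩
    refine h1.trans ?_
    apply Finset.card_le_card_of_injOn (fun z => ({z} : Finset V))
    · intro z hz
      simp only [DG, Finset.mem_coe, mem_filter, mem_univ, true_and] at hz
      simp only [Finset.mem_coe, mem_filter, Finpartition.parts_bot, mem_map, Function.Embedding.coeFn_mk]
      refine ⟨⟨z, mem_univ z, rfl⟩, ?_⟩
      simp only [setDist, coe_singleton, Set.image_singleton, csInf_singleton]
      rwa [SimpleGraph.dist_comm (u := u) (v := z), SimpleGraph.dist_comm (u := v) (v := z)]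
    · intro a _ b _ h
      exact Finset.singleton_injective h
  · rintro k ⟨P, hP⟩
    obtain ⟨x, y, hxy, hcard⟩ := Nat.sInf_mem hne
    refine (hP x y hxy).trans ?_
    unfold frakd
    rw [← hcard]
    classical
    set f : Finset V → V := fun S => if h : (S ∩ DG G x y).Nonempty then h.choose else x0 with hf
    have key : ∀ S ∈ P.parts.filter fun S => setDist G x S ≠ setDist G y S,
        f S ∈ S ∩ DG G x y := by
      intro S hS
      simp only [mem_filter] at hS
      have hne' : (S ∩ DG G x y).Nonempty := by
        by_contra hcon
        apply hS.2
        apply setDist_eq_of_forall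
        intro z hz
        by_contra hzc
        exact hcon ⟨z, Finset.mem_inter.2 ⟨hz, by simp [DG, hzc]⟩⟩
      simp only [hf, dif_pos hne']
      exact hne'.choose_spec
    apply Finset.card_le_card_of_injOn f
    · intro S hS
      exact (Finset.mem_inter.1 (key S hS)).2
    · intro S hS T hT hST
      by_contra hne''
      have hfS := (Finset.mem_inter.1 (key S hS)).1
      have hfT := (Finset.mem_inter.1 (key T hT)).1
      have hd := P.supIndep.pairwiseDisjoint (mem_filter.1 hS).1 (mem_filter.1 hT).1 hne''
      exact Finset.disjoint_left.1 hd hfS (hST ▸ hfT)
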